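/- Let p and q be probability distributions on {1,...,M_x} × {1,...,M_y} with 2 ≤ M_x ≤ M_y. Fix ε > 0 and suppose V(p,q) ≤ ε, where V denotes variational distance. Then: (i) if ε ≤ 2 − 2/M_x, then |I(p) − I(q)| ≤ (ε/2)·log[(M_x·M_y − 1)(M_x − 1)(M_y − 1)] + 3·ℋ(ε/2); and (ii) if ε > 2 − 2/M_x, then |I(p) − I(q)| ≤ log M_x. Here I denotes mutual information, ℋ the binary entropy function, and all logarithms are natural. -/

import Mathlib

open scoped BigOperators

/-- `p` is a probability distribution on the finite type `α`. -/
def IsDist {α : Type*} [Fintype α] (p : α → ℝ) : Prop :=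
  (∀ a, 0 ≤ p a) ∧ ∑ a, p a = 1

/-- Shannon entropy (natural logarithm, with `0 · log 0 = 0`). -/
noncomputable def entropy {α : Type*} [Fintype α] (p : α → ℝ) : ℝ :=
  -∑ a, p a * Real.log (p a)

/-- Variational distance between two distributions on the same finite set. -/
noncomputable def Vdist {α : Type*} [Fintype α] (p q : α → ℝ) : ℝ :=
  ∑ a, |p a - q a|

/-- First marginal of a joint distribution. -/
noncomputable def margX {Mx My : ℕ} (p : Fin Mx × Fin My → ℝ) : Fin Mx → ℝ :=
  fun i => ∑ j, p (i, j)

/-- Second marginal of a joint distribution. -/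
noncomputable def margY {Mx My : ℕ} (p : Fin Mx × Fin My → ℝ) : Fin My → ℝ :=
  fun j => ∑ i, p (i, j)

/-- Mutual information of a joint distribution. -/
noncomputable def mutInfo {Mx My : ℕ} (p : Fin Mx × Fin My → ℝ) : ℝ :=
  entropy (margX p) + entropy (margY p) - entropy p

/-- Binary entropy function. -/
noncomputable def binEnt (x : ℝ) : ℝ :=
  -x * Real.log x - (1 - x) * Real.log (1 - x)

open Finset

lemma binEnt_eq (x : ℝ) : binEnt x = Real.binEntropy x := by
  simp [binEnt, Real.binEntropy, Real.log_inv]; ring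

/-- Max-entropy lemma with support counting. -/
lemma sum_negMulLog_le {α : Type*} [Fintype α] (v : α → ℝ) (hv : ∀ a, 0 ≤ v a)
    {t K : ℝ} (ht : ∑ a, v a = t) (htpos : 0 < t)
    (hK : (((Finset.univ : Finset α).filter (fun a => v a ≠ 0)).card : ℝ) ≤ K) :
    -∑ a, v a * Real.log (v a) ≤ t * Real.log K - t * Real.log t := by
  classical
  set S := (Finset.univ : Finset α).filter (fun a => v a ≠ 0) with hS
  have hsub : ∀ x ∈ (Finset.univ : Finset α), x ∉ S → v x * Real.log (v x) = 0 := by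
    intro x _ hx
    simp only [hS, Finset.mem_filter, Finset.mem_univ, true_and, not_not] at hx
    simp [hx]
  have hsum : ∑ a ∈ S, v a * Real.log (v a) = ∑ a, v a * Real.log (v a) :=
    Finset.sum_subset (Finset.subset_univ S) hsub
  have hsub' : ∀ x ∈ (Finset.univ : Finset α), x ∉ S → v x = 0 := by
    intro x _ hx
    simp only [hS, Finset.mem_filter, Finset.mem_univ, true_and, not_not] at hx
    exact hx
  have hsumS : ∑ a ∈ S, v a = t := by
    rw [Finset.sum_subset (Finset.subset_univ S) hsub', ht]
  have hSne : S.Nonempty := by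
    by_contra h
    rw [Finset.not_nonempty_iff_eq_empty] at h
    rw [h, Finset.sum_empty] at hsumS
    exact htpos.ne hsumS
  have hc : (0 : ℝ) < S.card := by
    exact_mod_cast Finset.card_pos.mpr hSne
  set c : ℝ := (S.card : ℝ) with hcdef
  have key : ∀ a ∈ S, v a * Real.log t - v a * Real.log (v a) - v a * Real.log c ≤ t / c - v a := by
    intro a ha
    have hva : 0 < v a := by
      have := (Finset.mem_filter.mp ha).2
      exact lt_of_le_of_ne (hv a) (Ne.symm this)
    have h1 : Real.log (t / (v a * c)) ≤ t / (v a * c) - 1 :=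
      Real.log_le_sub_one_of_pos (by positivity)
    rw [Real.log_div htpos.ne' (by positivity), Real.log_mul hva.ne' (by positivity)] at h1
    have h2 := mul_le_mul_of_nonneg_left h1 hva.le
    have h3 : v a * (t / (v a * c) - 1) = t / c - v a := by
      field_simp
    rw [h3] at h2
    nlinarith [h2]
  have hsumkey := Finset.sum_le_sum key
  have e1 : ∑ i ∈ S, (v i * Real.log t - v i * Real.log (v i) - v i * Real.log c)
      = t * Real.log t - (∑ a, v a * Real.log (v a)) - t * Real.log c := by
    rw [Finset.sum_sub_distrib, Finset.sum_sub_distrib, ← Finset.sum_mul, ← Finset.sum_mul,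
      hsumS, hsum]
  have e2 : ∑ i ∈ S, (t / c - v i) = 0 := by
    rw [Finset.sum_sub_distrib, Finset.sum_const, hsumS, nsmul_eq_mul, ← hcdef]
    field_simp
    ring
  rw [e1, e2] at hsumkey
  have hlog : Real.log c ≤ Real.log K := Real.log_le_log hc hK
  nlinarith [mul_le_mul_of_nonneg_left hlog htpos.le]

lemma smul_negMulLog_div {s x : ℝ} (hs : 0 < s) (hx : 0 ≤ x) :
    s * Real.negMulLog (x / s) = -(x * Real.log x) + x * Real.log s := by
  rcases hx.eq_or_lt with h | h
  · simp [← h]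
  · rw [Real.negMulLog, Real.log_div h.ne' hs.ne']
    field_simp
    ring

lemma negMulLog_concave_pt {m u s w : ℝ} (hm : 0 ≤ m) (hu : 0 ≤ u) (hs : 0 < s) (hw : 0 < w)
    (hsw : s + w = 1) :
    s * Real.negMulLog (m / s) + w * Real.negMulLog (u / w) ≤ Real.negMulLog (m + u) := by
  have h := Real.concaveOn_negMulLog.2 (Set.mem_Ici.mpr (by positivity : (0:ℝ) ≤ m / s))
    (Set.mem_Ici.mpr (by positivity : (0:ℝ) ≤ u / w)) hs.le hw.le hsw
  have hcomb : s • (m / s) + w • (u / w) = m + u := by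
    simp only [smul_eq_mul]
    field_simp
  rw [hcomb] at h
  simpa using h

lemma negMulLog_add_le {x y : ℝ} (hx : 0 ≤ x) (hy : 0 ≤ y) :
    -((x + y) * Real.log (x + y)) ≤ -(x * Real.log x) - y * Real.log y := by
  have h1 : -(x * Real.log (x + y)) ≤ -(x * Real.log x) := by
    rcases hx.eq_or_lt with h | h
    · simp [← h]
    · have := Real.log_le_log h (by linarith : x ≤ x + y)
      nlinarith
  have h2 : -(y * Real.log (x + y)) ≤ -(y * Real.log y) := by
    rcases hy.eq_or_lt with h | h
    · simp [← h]
    · have := Real.log_le_log h (by linarith : y ≤ x + y)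
      nlinarith
  nlinarith

lemma entropy_nonneg {α : Type*} [Fintype α] (p : α → ℝ) (hp : IsDist p) : 0 ≤ entropy p := by
  rw [entropy, neg_nonneg]
  apply Finset.sum_nonpos
  intro a _
  have h1 : p a ≤ 1 := by
    rw [← hp.2]
    exact Finset.single_le_sum (fun b _ => hp.1 b) (Finset.mem_univ a)
  exact mul_nonpos_of_nonneg_of_nonpos (hp.1 a) (Real.log_nonpos (hp.1 a) h1)

lemma qary_eq (N : ℕ) (x : ℝ) :
    Real.qaryEntropy N x = x * Real.log ((N : ℝ) - 1) + binEnt x := by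
  rw [Real.qaryEntropy, binEnt_eq]
  norm_num

lemma entropy_sub_le {α : Type*} [Fintype α] (p q : α → ℝ) (hp : IsDist p) (hq : IsDist q)
    {N : ℕ} (hcard : Fintype.card α = N) (hN : 2 ≤ N) {e : ℝ} (he0 : 0 ≤ e)
    (hV : Vdist p q ≤ 2 * e) (heN : e ≤ 1 - 1 / N) :
    entropy q - entropy p ≤ e * Real.log ((N : ℝ) - 1) + binEnt e := by
  classical
  have hNpos : (0:ℝ) < (N:ℝ) := by
    have : 0 < N := by omega
    exact_mod_cast this
  have hN1 : (1:ℝ) ≤ (N:ℝ) - 1 := by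
    have : (2:ℝ) ≤ (N:ℝ) := by exact_mod_cast hN
    linarith
  set m : α → ℝ := fun a => min (p a) (q a) with hmdef
  set u : α → ℝ := fun a => p a - m a with hudef
  set v : α → ℝ := fun a => q a - m a with hvdef
  have hm0 : ∀ a, 0 ≤ m a := fun a => le_min (hp.1 a) (hq.1 a)
  have hu : ∀ a, 0 ≤ u a := fun a => sub_nonneg.mpr (min_le_left _ _)
  have hv : ∀ a, 0 ≤ v a := fun a => sub_nonneg.mpr (min_le_right _ _)
  have huv : ∀ a, u a = 0 ∨ v a = 0 := by
    intro a
    rcases le_total (p a) (q a) with h | h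
    · left; simp [hudef, hmdef, min_eq_left h]
    · right; simp [hvdef, hmdef, min_eq_right h]
  set t : ℝ := ∑ a, u a with htdef
  have ht0 : 0 ≤ t := Finset.sum_nonneg fun a _ => hu a
  have hsumu : ∑ a, u a = t := htdef.symm
  have hsumv : ∑ a, v a = t := by
    have h1 : ∑ a, u a - ∑ a, v a = 0 := by
      rw [← Finset.sum_sub_distrib]
      have : ∀ a, u a - v a = p a - q a := by intro a; simp only [hudef, hvdef]; ring
      simp only [this]
      rw [Finset.sum_sub_distrib, hp.2, hq.2, sub_self]
    linarith
  have hsumm : ∑ a, m a = 1 - t := by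
    have h1 : ∑ a, u a = ∑ a, p a - ∑ a, m a := by
      rw [← Finset.sum_sub_distrib]
    rw [hp.2] at h1
    linarith
  have habs : ∀ a, |p a - q a| = u a + v a := by
    intro a
    rcases le_total (p a) (q a) with h | h
    · rw [abs_of_nonpos (sub_nonpos.mpr h)]
      simp [hudef, hvdef, hmdef, min_eq_left h]
    · rw [abs_of_nonneg (sub_nonneg.mpr h)]
      simp [hudef, hvdef, hmdef, min_eq_right h]
  have hVt : Vdist p q = 2 * t := by
    rw [Vdist]
    simp only [habs]
    rw [Finset.sum_add_distrib, hsumu, hsumv]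
    ring
  have hte : t ≤ e := by rw [hVt] at hV; linarith
  have hNinv : 0 < 1 / (N:ℝ) := by positivity
  have he1 : e < 1 := by linarith
  have hbe : 0 ≤ binEnt e := by
    rw [binEnt_eq]; exact Real.binEntropy_nonneg he0 he1.le
  have hlogN : 0 ≤ Real.log ((N:ℝ) - 1) := Real.log_nonneg hN1
  rcases ht0.eq_or_lt with h0 | h0
  · -- t = 0 : p = q
    have hu0 : ∀ a ∈ Finset.univ, u a = 0 :=
      (Finset.sum_eq_zero_iff_of_nonneg (fun a _ => hu a)).mp (hsumu.trans h0.symm)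
    have hv0 : ∀ a ∈ Finset.univ, v a = 0 :=
      (Finset.sum_eq_zero_iff_of_nonneg (fun a _ => hv a)).mp (hsumv.trans h0.symm)
    have hpq : p = q := by
      funext a
      have h1 := hu0 a (Finset.mem_univ a)
      have h2 := hv0 a (Finset.mem_univ a)
      simp only [hudef, hvdef] at h1 h2
      linarith
    rw [hpq, sub_self]
    positivity
  · -- 0 < t
    have h1t : 0 < 1 - t := by linarith
    have hq' : ∀ a, q a = m a + v a := by intro a; simp [hvdef]
    have hp' : ∀ a, p a = m a + u a := by intro a; simp [hudef]
    -- (A) upper bound on entropy q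
    have hA : ∑ a, (m a * Real.log (m a) + v a * Real.log (v a)) ≤
        ∑ a, q a * Real.log (q a) := by
      apply Finset.sum_le_sum
      intro a _
      have h := negMulLog_add_le (hm0 a) (hv a)
      rw [← hq' a] at h
      linarith
    -- (B) lower bound on entropy p
    have hB : ∑ a, (-(m a * Real.log (m a)) + m a * Real.log (1 - t)
        + (-(u a * Real.log (u a)) + u a * Real.log t)) ≤ ∑ a, -(p a * Real.log (p a)) := by
      apply Finset.sum_le_sum
      intro a _
      have h := negMulLog_concave_pt (hm0 a) (hu a) h1t h0 (by ring)
      rw [smul_negMulLog_div h1t (hm0 a), smul_negMulLog_div h0 (hu a), ← hp' a,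
        Real.negMulLog] at h
      linarith
    -- (C) max-entropy bound on v
    have hsupp : (((Finset.univ : Finset α).filter (fun a => v a ≠ 0)).card : ℝ) ≤ (N:ℝ) - 1 := by
      obtain ⟨a0, ha0⟩ : ∃ a, u a ≠ 0 := by
        by_contra h
        push_neg at h
        have : t = 0 := by rw [htdef]; exact Finset.sum_eq_zero fun a _ => h a
        linarith
      have hva0 : v a0 = 0 := (huv a0).resolve_left ha0
      have hsub : ((Finset.univ : Finset α).filter (fun a => v a ≠ 0)) ⊆
          Finset.univ.erase a0 := by
        intro x hx
        rw [Finset.mem_erase]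
        refine ⟨?_, Finset.mem_univ x⟩
        intro hxa
        rw [hxa] at hx
        exact (Finset.mem_filter.mp hx).2 hva0
      have hcardle := Finset.card_le_card hsub
      rw [Finset.card_erase_of_mem (Finset.mem_univ a0), Finset.card_univ, hcard] at hcardle
      have : ((N - 1 : ℕ) : ℝ) = (N:ℝ) - 1 := by
        rw [Nat.cast_sub (by omega)]; norm_num
      rw [← this]
      exact_mod_cast hcardle
    have hC := sum_negMulLog_le v hv hsumv h0 hsupp
    -- (D)
    have hD : ∑ a, u a * Real.log (u a) ≤ t * Real.log t := by
      have h1 : ∀ a ∈ Finset.univ, u a * Real.log (u a) ≤ u a * Real.log t := by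
        intro a _
        rcases (hu a).eq_or_lt with h | h
        · simp [← h]
        · have hle : u a ≤ t := by
            rw [htdef]; exact Finset.single_le_sum (fun b _ => hu b) (Finset.mem_univ a)
          exact mul_le_mul_of_nonneg_left (Real.log_le_log h hle) (hu a)
      calc ∑ a, u a * Real.log (u a) ≤ ∑ a, u a * Real.log t := Finset.sum_le_sum h1
        _ = t * Real.log t := by rw [← Finset.sum_mul, hsumu]
    -- combine
    have hcomb : entropy q - entropy p ≤ t * Real.log ((N:ℝ) - 1) + binEnt t := by
      rw [entropy, entropy, binEnt]
      have hBsum : ∑ a, (-(m a * Real.log (m a)) + m a * Real.log (1 - t)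
          + (-(u a * Real.log (u a)) + u a * Real.log t))
          = -∑ a, m a * Real.log (m a) + (1 - t) * Real.log (1 - t)
            + (-∑ a, u a * Real.log (u a) + t * Real.log t) := by
        rw [Finset.sum_add_distrib, Finset.sum_add_distrib, Finset.sum_add_distrib,
          Finset.sum_neg_distrib, Finset.sum_neg_distrib, ← Finset.sum_mul, ← Finset.sum_mul,
          hsumm, hsumu]
      rw [hBsum] at hB
      rw [Finset.sum_add_distrib] at hA
      have hPneg : ∑ a, -(p a * Real.log (p a)) = -∑ a, p a * Real.log (p a) :=
        Finset.sum_neg_distrib _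
      rw [hPneg] at hB
      linarith
    -- monotonicity
    have hmem_t : t ∈ Set.Icc (0:ℝ) (1 - 1/(N:ℝ)) := ⟨ht0, le_trans hte heN⟩
    have hmem_e : e ∈ Set.Icc (0:ℝ) (1 - 1/(N:ℝ)) := ⟨he0, heN⟩
    have hmono := (Real.qaryEntropy_strictMonoOn hN).monotoneOn hmem_t hmem_e hte
    rw [qary_eq, qary_eq] at hmono
    linarith

lemma Vdist_symm {α : Type*} [Fintype α] (p q : α → ℝ) : Vdist q p = Vdist p q := by
  simp [Vdist, abs_sub_comm]

lemma abs_entropy_sub_le {α : Type*} [Fintype α] (p q : α → ℝ) (hp : IsDist p) (hq : IsDist q)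
    {N : ℕ} (hcard : Fintype.card α = N) (hN : 2 ≤ N) {e : ℝ} (he0 : 0 ≤ e)
    (hV : Vdist p q ≤ 2 * e) (heN : e ≤ 1 - 1 / N) :
    |entropy p - entropy q| ≤ e * Real.log ((N : ℝ) - 1) + binEnt e := by
  rw [abs_sub_le_iff]
  exact ⟨entropy_sub_le q p hq hp hcard hN he0 (by rwa [Vdist_symm]) heN,
    entropy_sub_le p q hp hq hcard hN he0 hV heN⟩

lemma margX_isDist {Mx My : ℕ} (p : Fin Mx × Fin My → ℝ) (hp : IsDist p) : IsDist (margX p) := by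
  refine ⟨fun i => Finset.sum_nonneg fun j _ => hp.1 _, ?_⟩
  rw [← hp.2, Fintype.sum_prod_type]
  rfl

lemma margY_isDist {Mx My : ℕ} (p : Fin Mx × Fin My → ℝ) (hp : IsDist p) : IsDist (margY p) := by
  refine ⟨fun j => Finset.sum_nonneg fun i _ => hp.1 _, ?_⟩
  rw [← hp.2, Fintype.sum_prod_type_right]
  rfl

lemma Vdist_margX_le {Mx My : ℕ} (p q : Fin Mx × Fin My → ℝ) :
    Vdist (margX p) (margX q) ≤ Vdist p q := by
  rw [Vdist, Vdist, Fintype.sum_prod_type]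
  apply Finset.sum_le_sum
  intro i _
  calc |margX p i - margX q i| = |∑ j, (p (i, j) - q (i, j))| := by
        rw [margX, margX, ← Finset.sum_sub_distrib]
    _ ≤ ∑ j, |p (i, j) - q (i, j)| := Finset.abs_sum_le_sum_abs _ _

lemma Vdist_margY_le {Mx My : ℕ} (p q : Fin Mx × Fin My → ℝ) :
    Vdist (margY p) (margY q) ≤ Vdist p q := by
  rw [Vdist, Vdist, Fintype.sum_prod_type_right]
  apply Finset.sum_le_sum
  intro j _
  calc |margY p j - margY q j| = |∑ i, (p (i, j) - q (i, j))| := by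
        rw [margY, margY, ← Finset.sum_sub_distrib]
    _ ≤ ∑ i, |p (i, j) - q (i, j)| := Finset.abs_sum_le_sum_abs _ _

lemma entropy_margX_expand {Mx My : ℕ} (p : Fin Mx × Fin My → ℝ) :
    entropy (margX p) = -∑ ab : Fin Mx × Fin My, p ab * Real.log (margX p ab.1) := by
  rw [entropy, Fintype.sum_prod_type]
  congr 1
  apply Finset.sum_congr rfl
  intro i _
  show margX p i * Real.log (margX p i) = ∑ j, p (i, j) * Real.log (margX p i)
  rw [← Finset.sum_mul]
  rfl

lemma entropy_margY_expand {Mx My : ℕ} (p : Fin Mx × Fin My → ℝ) :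
    entropy (margY p) = -∑ ab : Fin Mx × Fin My, p ab * Real.log (margY p ab.2) := by
  rw [entropy, Fintype.sum_prod_type_right]
  congr 1
  apply Finset.sum_congr rfl
  intro j _
  show margY p j * Real.log (margY p j) = ∑ i, p (i, j) * Real.log (margY p j)
  rw [← Finset.sum_mul]
  rfl

lemma mutInfo_nonneg {Mx My : ℕ} (p : Fin Mx × Fin My → ℝ) (hp : IsDist p) : 0 ≤ mutInfo p := by
  classical
  have hX := margX_isDist p hp
  have hY := margY_isDist p hp
  set S := (Finset.univ : Finset (Fin Mx × Fin My)).filter (fun ab => p ab ≠ 0) with hSdef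
  have key : ∑ ab, (p ab * Real.log (margX p ab.1) + p ab * Real.log (margY p ab.2)
      - p ab * Real.log (p ab)) ≤ 0 := by
    have hvanish : ∀ ab ∈ (Finset.univ : Finset (Fin Mx × Fin My)), ab ∉ S →
        p ab * Real.log (margX p ab.1) + p ab * Real.log (margY p ab.2)
          - p ab * Real.log (p ab) = 0 := by
      intro ab _ hab
      simp only [hSdef, Finset.mem_filter, Finset.mem_univ, true_and, not_not] at hab
      simp [hab]
    rw [← Finset.sum_subset (Finset.subset_univ S) hvanish]
    have hb : ∀ ab ∈ S, p ab * Real.log (margX p ab.1) + p ab * Real.log (margY p ab.2)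
        - p ab * Real.log (p ab) ≤ margX p ab.1 * margY p ab.2 - p ab := by
      intro ab hab
      have hpab : 0 < p ab :=
        lt_of_le_of_ne (hp.1 ab) (Ne.symm (Finset.mem_filter.mp hab).2)
      have hXpos : 0 < margX p ab.1 := by
        apply lt_of_lt_of_le hpab
        rw [margX]
        have : p ab = p (ab.1, ab.2) := by rw [Prod.mk.eta]
        rw [this]
        exact Finset.single_le_sum (fun j _ => hp.1 (ab.1, j)) (Finset.mem_univ ab.2)
      have hYpos : 0 < margY p ab.2 := by
        apply lt_of_lt_of_le hpab
        rw [margY]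
        have : p ab = p (ab.1, ab.2) := by rw [Prod.mk.eta]
        rw [this]
        exact Finset.single_le_sum (fun i _ => hp.1 (i, ab.2)) (Finset.mem_univ ab.1)
      have hlog : Real.log (margX p ab.1 * margY p ab.2 / p ab)
          ≤ margX p ab.1 * margY p ab.2 / p ab - 1 :=
        Real.log_le_sub_one_of_pos (by positivity)
      rw [Real.log_div (by positivity) hpab.ne', Real.log_mul hXpos.ne' hYpos.ne'] at hlog
      have h2 := mul_le_mul_of_nonneg_left hlog hpab.le
      have h3 : p ab * (margX p ab.1 * margY p ab.2 / p ab - 1)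
          = margX p ab.1 * margY p ab.2 - p ab := by
        field_simp
      rw [h3] at h2
      nlinarith [h2]
    calc ∑ ab ∈ S, (p ab * Real.log (margX p ab.1) + p ab * Real.log (margY p ab.2)
          - p ab * Real.log (p ab))
        ≤ ∑ ab ∈ S, (margX p ab.1 * margY p ab.2 - p ab) := Finset.sum_le_sum hb
      _ = ∑ ab ∈ S, margX p ab.1 * margY p ab.2 - ∑ ab ∈ S, p ab := Finset.sum_sub_distrib _ _
      _ ≤ ∑ ab : Fin Mx × Fin My, margX p ab.1 * margY p ab.2 - ∑ ab ∈ S, p ab := by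
          have : ∑ ab ∈ S, margX p ab.1 * margY p ab.2
              ≤ ∑ ab : Fin Mx × Fin My, margX p ab.1 * margY p ab.2 := by
            apply Finset.sum_le_sum_of_subset_of_nonneg (Finset.subset_univ S)
            intro ab _ _
            exact mul_nonneg (hX.1 ab.1) (hY.1 ab.2)
          linarith
      _ = 1 - 1 := by
          have h1 : ∑ ab : Fin Mx × Fin My, margX p ab.1 * margY p ab.2 = 1 := by
            rw [Fintype.sum_prod_type]
            have : ∀ i : Fin Mx, ∑ j, margX p i * margY p j = margX p i := by
              intro i
              rw [← Finset.mul_sum, hY.2, mul_one]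
            simp only [this]
            exact hX.2
          have h2 : ∑ ab ∈ S, p ab = 1 := by
            rw [Finset.sum_subset (Finset.subset_univ S) (fun x _ hx => by
              simpa [hSdef, not_not] using (by
                simp only [hSdef, Finset.mem_filter, Finset.mem_univ, true_and, not_not] at hx
                exact hx))]
            exact hp.2
          rw [h1, h2]
      _ = 0 := by norm_num
  rw [mutInfo, entropy_margX_expand, entropy_margY_expand, entropy]
  have hexp : ∑ ab, (p ab * Real.log (margX p ab.1) + p ab * Real.log (margY p ab.2)
      - p ab * Real.log (p ab))
      = ∑ ab, p ab * Real.log (margX p ab.1) + ∑ ab, p ab * Real.log (margY p ab.2)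
        - ∑ ab, p ab * Real.log (p ab) := by
    rw [Finset.sum_sub_distrib, Finset.sum_add_distrib]
  rw [hexp] at key
  linarith

lemma entropy_margY_le {Mx My : ℕ} (p : Fin Mx × Fin My → ℝ) (hp : IsDist p) :
    entropy (margY p) ≤ entropy p := by
  rw [entropy_margY_expand, entropy, neg_le_neg_iff]
  apply Finset.sum_le_sum
  intro ab _
  rcases (hp.1 ab).eq_or_lt with h | h
  · simp [← h]
  · have hle : p ab ≤ margY p ab.2 := by
      rw [margY]
      have : p ab = p (ab.1, ab.2) := by rw [Prod.mk.eta]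
      rw [this]
      exact Finset.single_le_sum (fun i _ => hp.1 (i, ab.2)) (Finset.mem_univ ab.1)
    exact mul_le_mul_of_nonneg_left (Real.log_le_log h hle) (hp.1 ab)

lemma entropy_le_log {α : Type*} [Fintype α] (p : α → ℝ) (hp : IsDist p) {N : ℕ}
    (hcard : Fintype.card α = N) : entropy p ≤ Real.log N := by
  have hK : (((Finset.univ : Finset α).filter (fun a => p a ≠ 0)).card : ℝ) ≤ (N : ℝ) := by
    have := Finset.card_le_card (Finset.subset_univ
      ((Finset.univ : Finset α).filter (fun a => p a ≠ 0)))
    rw [Finset.card_univ, hcard] at this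
    exact_mod_cast this
  have := sum_negMulLog_le p hp.1 hp.2 one_pos hK
  simpa [entropy] using this

lemma mutInfo_le_log {Mx My : ℕ} (p : Fin Mx × Fin My → ℝ) (hp : IsDist p) :
    mutInfo p ≤ Real.log Mx := by
  have h1 : entropy (margX p) ≤ Real.log Mx :=
    entropy_le_log (margX p) (margX_isDist p hp) (Fintype.card_fin Mx)
  have h2 := entropy_margY_le p hp
  rw [mutInfo]
  linarith


/-- Theorem 1: improved mutual-information difference bound.
If `V(p,q) ≤ ε` then `|I(p)-I(q)|` is bounded by
`(ε/2)·log[(Mx·My-1)(Mx-1)(My-1)] + 3·ℋ(ε/2)` when `ε ≤ 2 - 2/Mx`,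
and by `log Mx` when `ε > 2 - 2/Mx`. -/
theorem mutInfo_diff_le_improved {Mx My : ℕ} (hMx : 2 ≤ Mx) (hMxy : Mx ≤ My)
    (p q : Fin Mx × Fin My → ℝ) (hp : IsDist p) (hq : IsDist q)
    (ε : ℝ) (hε : 0 < ε) (hV : Vdist p q ≤ ε) :
    (ε ≤ 2 - 2 / (Mx : ℝ) →
      |mutInfo p - mutInfo q| ≤
        ε / 2 * Real.log (((Mx : ℝ) * My - 1) * ((Mx : ℝ) - 1) * ((My : ℝ) - 1)) +
          3 * binEnt (ε / 2)) ∧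
    (2 - 2 / (Mx : ℝ) < ε → |mutInfo p - mutInfo q| ≤ Real.log (Mx : ℝ)) := by
  have hMxR : (2:ℝ) ≤ (Mx:ℝ) := by exact_mod_cast hMx
  have hMyR : (Mx:ℝ) ≤ (My:ℝ) := by exact_mod_cast hMxy
  have hMy2 : 2 ≤ My := le_trans hMx hMxy
  have hMxpos : (0:ℝ) < Mx := by linarith
  have hMypos : (0:ℝ) < My := by linarith
  constructor
  · intro hcase
    set e : ℝ := ε / 2 with hedef
    have he0 : 0 ≤ e := by positivity
    have hV2 : Vdist p q ≤ 2 * e := by rw [hedef]; linarith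
    have h2Mx : 2 / (Mx:ℝ) = 2 * (1 / (Mx:ℝ)) := by ring
    have heMx : e ≤ 1 - 1 / (Mx:ℝ) := by
      rw [hedef]; rw [h2Mx] at hcase; linarith
    have heMy : e ≤ 1 - 1 / (My:ℝ) := by
      have : 1 / (My:ℝ) ≤ 1 / (Mx:ℝ) := one_div_le_one_div_of_le hMxpos hMyR
      linarith
    have hcastJ : ((Mx * My : ℕ) : ℝ) = (Mx:ℝ) * My := by push_cast; ring
    have heJ : e ≤ 1 - 1 / ((Mx * My : ℕ) : ℝ) := by
      rw [hcastJ]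
      have h1 : (Mx:ℝ) ≤ (Mx:ℝ) * My := by nlinarith
      have h2 : 1 / ((Mx:ℝ) * My) ≤ 1 / (Mx:ℝ) := one_div_le_one_div_of_le hMxpos h1
      linarith
    have hNJ : 2 ≤ Mx * My := le_trans hMx (Nat.le_mul_of_pos_right Mx (by omega))
    have hcardJ : Fintype.card (Fin Mx × Fin My) = Mx * My := by simp
    -- three entropy-difference bounds
    have hJ := abs_entropy_sub_le p q hp hq hcardJ hNJ he0 hV2 heJ
    have hXb := abs_entropy_sub_le (margX p) (margX q) (margX_isDist p hp) (margX_isDist q hq)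
      (Fintype.card_fin Mx) hMx he0 (le_trans (Vdist_margX_le p q) hV2) heMx
    have hYb := abs_entropy_sub_le (margY p) (margY q) (margY_isDist p hp) (margY_isDist q hq)
      (Fintype.card_fin My) hMy2 he0 (le_trans (Vdist_margY_le p q) hV2) heMy
    rw [hcastJ] at hJ
    -- log of product
    have hA : (0:ℝ) < (Mx:ℝ) * My - 1 := by nlinarith
    have hB : (0:ℝ) < (Mx:ℝ) - 1 := by linarith
    have hC : (0:ℝ) < (My:ℝ) - 1 := by linarith
    have hlog : Real.log (((Mx:ℝ) * My - 1) * ((Mx:ℝ) - 1) * ((My:ℝ) - 1))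
        = Real.log ((Mx:ℝ) * My - 1) + Real.log ((Mx:ℝ) - 1) + Real.log ((My:ℝ) - 1) := by
      rw [Real.log_mul (by positivity) hC.ne', Real.log_mul hA.ne' hB.ne']
    have hdecomp : mutInfo p - mutInfo q
        = (entropy (margX p) - entropy (margX q)) + (entropy (margY p) - entropy (margY q))
          - (entropy p - entropy q) := by
      rw [mutInfo, mutInfo]; ring
    obtain ⟨hJ1, hJ2⟩ := abs_le.mp hJ
    obtain ⟨hX1, hX2⟩ := abs_le.mp hXb
    obtain ⟨hY1, hY2⟩ := abs_le.mp hYb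
    rw [hdecomp, abs_le, hlog]
    have hexp : e * (Real.log ((Mx:ℝ) * My - 1) + Real.log ((Mx:ℝ) - 1) + Real.log ((My:ℝ) - 1))
        = e * Real.log ((Mx:ℝ) * My - 1) + e * Real.log ((Mx:ℝ) - 1)
          + e * Real.log ((My:ℝ) - 1) := by ring
    constructor <;> linarith
  · intro _
    have h1 := mutInfo_nonneg p hp
    have h2 := mutInfo_nonneg q hq
    have h3 := mutInfo_le_log p hp
    have h4 := mutInfo_le_log q hq
    rw [abs_le]
    constructor <;> linarith
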